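/- For every ε > 0 and every iteration k, one has f(x^{k+1}) − f(x^k) ≤ (L/(2ε))·Σ_{i=k−τ}^{k−1} ‖Δ^i‖₂² + [((τε + 1)L)/2 − L/γ]·‖Δ^k‖₂². -/

import Mathlib

open MeasureTheory Filter
open scoped BigOperators
open scoped RealInnerProductSpace

private lemma descent_lemma {E : Type*} [NormedAddCommGroup E] [InnerProductSpace ℝ E]
    [CompleteSpace E]
    (f : E → ℝ) (L : ℝ) (hdiff : Differentiable ℝ f)
    (hlip : ∀ y z, ‖gradient f y - gradient f z‖ ≤ L * ‖y - z‖)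
    (x y : E) :
    f y ≤ f x + ⟪gradient f x, y - x⟫ + L / 2 * ‖y - x‖ ^ 2 := by
  set c : ℝ → E := fun t => x + t • (y - x) with hc
  have hcderiv : ∀ t : ℝ, HasDerivAt c (y - x) t := by
    intro t
    convert ((hasDerivAt_id t).smul_const (y - x)).const_add x using 1 <;> simp [hc]
  have hgderiv : ∀ t : ℝ, HasDerivAt (fun s => f (c s))
      ⟪gradient f (c t), y - x⟫ t := by
    intro t
    have h1 := (hdiff (c t)).hasGradientAt
    have h2 := h1.hasFDerivAt.comp_hasDerivAt t (hcderiv t)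
    have h3 : HasDerivAt (fun s => f (c s)) ((InnerProductSpace.toDual ℝ E (gradient f (c t))) (y - x)) t := h2
    simpa [InnerProductSpace.toDual] using h3
  set φ : ℝ → ℝ := fun t =>
    L / 2 * t ^ 2 * ‖y - x‖ ^ 2 + t * ⟪gradient f x, y - x⟫ - f (c t) with hφ
  have hφderiv : ∀ t : ℝ, HasDerivAt φ
      (L * t * ‖y - x‖ ^ 2 + ⟪gradient f x, y - x⟫ - ⟪gradient f (c t), y - x⟫) t := by
    intro t
    have h1 : HasDerivAt (fun t : ℝ => L / 2 * t ^ 2 * ‖y - x‖ ^ 2)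
        (L * t * ‖y - x‖ ^ 2) t := by
      have := ((hasDerivAt_pow 2 t).const_mul (L / 2)).mul_const (‖y - x‖ ^ 2)
      refine this.congr_deriv ?_
      push_cast; ring
    have h2 : HasDerivAt (fun t : ℝ => t * ⟪gradient f x, y - x⟫)
        ⟪gradient f x, y - x⟫ t := by
      simpa using (hasDerivAt_id t).mul_const ⟪gradient f x, y - x⟫
    exact (h1.add h2).sub (hgderiv t)
  have hmono : MonotoneOn φ (Set.Icc (0:ℝ) 1) := by
    apply monotoneOn_of_deriv_nonneg (convex_Icc 0 1)
    · exact (Continuous.continuousOn (by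
        have : Differentiable ℝ φ := fun t => (hφderiv t).differentiableAt
        exact this.continuous))
    · intro t ht
      exact (hφderiv t).differentiableAt.differentiableWithinAt
    · intro t ht
      rw [interior_Icc] at ht
      rw [(hφderiv t).deriv]
      have hineq : ⟪gradient f (c t), y - x⟫ - ⟪gradient f x, y - x⟫
          ≤ L * t * ‖y - x‖ ^ 2 := by
        have h1 : ⟪gradient f (c t) - gradient f x, y - x⟫
            ≤ ‖gradient f (c t) - gradient f x‖ * ‖y - x‖ := real_inner_le_norm _ _
        have h2 : ‖gradient f (c t) - gradient f x‖ ≤ L * ‖c t - x‖ := hlip _ _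
        have h3 : ‖c t - x‖ = t * ‖y - x‖ := by
          simp [hc, norm_smul, abs_of_pos ht.1]
        rw [inner_sub_left] at h1
        have h4 : ‖gradient f (c t) - gradient f x‖ * ‖y - x‖
            ≤ L * t * ‖y - x‖ ^ 2 := by
          rw [h3] at h2
          calc ‖gradient f (c t) - gradient f x‖ * ‖y - x‖
              ≤ (L * (t * ‖y - x‖)) * ‖y - x‖ := by
                apply mul_le_mul_of_nonneg_right h2 (norm_nonneg _)
            _ = L * t * ‖y - x‖ ^ 2 := by ring
        linarith
      linarith
  have h01 := hmono (Set.mem_Icc.mpr ⟨le_refl 0, zero_le_one⟩)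
      (Set.mem_Icc.mpr ⟨zero_le_one, le_refl 1⟩) zero_le_one
  have hc0 : c 0 = x := by simp [hc]
  have hc1 : c 1 = y := by simp [hc]
  simp only [hφ, hc0, hc1] at h01
  nlinarith [h01]

private lemma tele_sum (g : ℕ → ℝ) :
    ∀ {m n : ℕ}, m ≤ n → ∑ l ∈ Finset.Ico m n, (g (l+1) - g l) = g n - g m := by
  intro m n h
  induction n, h using Nat.le_induction with
  | base => simp
  | succ n hmn ih =>
    rw [Finset.sum_Ico_succ_top (by omega), ih]
    ring

private lemma sum_coord {n : ℕ} (s : Finset ℕ) (v : ℕ → EuclideanSpace ℝ (Fin n)) (i : Fin n) :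
    (∑ l ∈ s, v l) i = ∑ l ∈ s, v l i := by
  induction s using Finset.cons_induction with
  | empty => rfl
  | cons a s ha ih => rw [Finset.sum_cons, Finset.sum_cons, ← ih]; rfl

theorem fundamental_inequality_bounded
    (N : ℕ) (hN : 0 < N)
    (f : EuclideanSpace ℝ (Fin N) → ℝ)
    (L : ℝ) (hL : 0 < L)
    (hdiff : Differentiable ℝ f)
    (hlip : ∀ y z : EuclideanSpace ℝ (Fin N), ‖gradient f y - gradient f z‖ ≤ L * ‖y - z‖)
    (fmin : ℝ) (hfmin : ∀ y, fmin ≤ f y)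
    (x : ℕ → EuclideanSpace ℝ (Fin N))
    (ik : ℕ → Fin N)
    (jv : ℕ → Fin N → ℕ)
    (hjk : ∀ k i, jv k i ≤ k)
    (xhat : ℕ → EuclideanSpace ℝ (Fin N))
    (hxhat : ∀ k i, xhat k i = x (k - jv k i) i)
    (τ : ℕ) (hτ1 : 1 ≤ τ) (hbdd : ∀ k i, jv k i ≤ τ)
    (γ : ℝ) (hγ : 0 < γ)
    (hupd : ∀ k, x (k+1) (ik k) = x k (ik k) - (γ / L) * gradient f (xhat k) (ik k))
    (hfix : ∀ k i, i ≠ ik k → x (k+1) i = x k i) :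
    ∀ ε : ℝ, 0 < ε → ∀ k : ℕ,
      f (x (k+1)) - f (x k)
        ≤ (L / (2 * ε)) * ∑ i ∈ Finset.Ico (k - τ) k, ‖x (i+1) - x i‖ ^ 2
          + (((τ : ℝ) * ε + 1) * L / 2 - L / γ) * ‖x (k+1) - x k‖ ^ 2 := by
  intro ε hε k
  set i0 := ik k with hi0
  set a : ℝ := x (k+1) i0 - x k i0 with ha
  set Δ : EuclideanSpace ℝ (Fin N) := x (k+1) - x k with hΔ
  set g := gradient f (xhat k) with hg
  -- Δ is a single-coordinate vector
  have hΔsingle : Δ = EuclideanSpace.single i0 a := by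
    ext j
    rw [EuclideanSpace.single_apply]
    by_cases hj : j = i0
    · subst hj; simp [hΔ, ha]
    · simp only [hj, if_false]
      have := hfix k j hj
      show x (k+1) j - x k j = 0
      rw [this]; ring
  have hΔnorm : ‖Δ‖ = |a| := by rw [hΔsingle, EuclideanSpace.norm_single]; rfl
  -- inner product of g with Δ
  have hga : g i0 = -(L/γ) * a := by
    have := hupd k
    rw [← hi0, ← hg] at this
    have hne : (γ : ℝ) ≠ 0 := ne_of_gt hγ
    have hLne : (L : ℝ) ≠ 0 := ne_of_gt hL
    field_simp [ha]
    rw [ha, this]; field_simp; ring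
  have hinner_g : ⟪g, Δ⟫ = -(L/γ) * a^2 := by
    rw [hΔsingle]
    have := EuclideanSpace.inner_single_right (𝕜 := ℝ) i0 a g
    rw [this, hga]
    simp [starRingEnd_apply]
    ring
  -- descent lemma
  have hdesc := descent_lemma f L hdiff hlip (x k) (x (k+1))
  rw [← hΔ] at hdesc
  -- splitting the inner product
  have hsplit : ⟪gradient f (x k), Δ⟫
      = ⟪g, Δ⟫ + ⟪gradient f (x k) - g, Δ⟫ := by
    rw [inner_sub_left]; ring
  -- bound on the cross term
  have hcross : ⟪gradient f (x k) - g, Δ⟫ ≤ L * ‖x k - xhat k‖ * ‖Δ‖ := by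
    calc ⟪gradient f (x k) - g, Δ⟫
        ≤ ‖gradient f (x k) - g‖ * ‖Δ‖ := real_inner_le_norm _ _
      _ ≤ (L * ‖x k - xhat k‖) * ‖Δ‖ :=
          mul_le_mul_of_nonneg_right (hlip _ _) (norm_nonneg _)
      _ = L * ‖x k - xhat k‖ * ‖Δ‖ := by ring
  -- bound on the delay vector
  set S := Finset.Ico (k - τ) k with hS
  set v : ℕ → EuclideanSpace ℝ (Fin N) :=
    fun l => WithLp.toLp 2 (fun i => if k - jv k i ≤ l then (x (l+1) i - x l i) else 0) with hv
  have hdsum : x k - xhat k = ∑ l ∈ S, v l := by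
    ext i
    rw [sum_coord]
    show x k i - xhat k i = _
    rw [hxhat k i]
    have hsub : k - τ ≤ k - jv k i := Nat.sub_le_sub_left (hbdd k i) k
    have hfilter : ∑ l ∈ S, v l i
        = ∑ l ∈ Finset.Ico (k - jv k i) k, (x (l+1) i - x l i) := by
      rw [hv]
      simp only [WithLp.ofLp_toLp]
      rw [show Finset.Ico (k - jv k i) k
            = S.filter (fun l => k - jv k i ≤ l) from by
          ext l
          simp only [Finset.mem_filter, Finset.mem_Ico, hS]
          omega, Finset.sum_filter]
    rw [hfilter, tele_sum (fun l => x l i) (Nat.sub_le k (jv k i))]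
  have hvnorm : ∀ l, ‖v l‖ ≤ ‖x (l+1) - x l‖ := by
    intro l
    rw [EuclideanSpace.norm_eq, EuclideanSpace.norm_eq]
    apply Real.sqrt_le_sqrt
    apply Finset.sum_le_sum
    intro i _
    have h1 : ‖v l i‖ ≤ ‖x (l+1) i - x l i‖ := by
      rw [hv]
      simp only [WithLp.ofLp_toLp]
      split
      · exact le_rfl
      · simp
    exact pow_le_pow_left₀ (norm_nonneg _) h1 2
  have hdnorm : ‖x k - xhat k‖ ≤ ∑ l ∈ S, ‖x (l+1) - x l‖ := by
    rw [hdsum]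
    calc ‖∑ l ∈ S, v l‖ ≤ ∑ l ∈ S, ‖v l‖ := norm_sum_le _ _
      _ ≤ ∑ l ∈ S, ‖x (l+1) - x l‖ := Finset.sum_le_sum fun l _ => hvnorm l
  -- Young-type bound
  have hyoung : L * ‖x k - xhat k‖ * ‖Δ‖
      ≤ (L / (2*ε)) * ∑ l ∈ S, ‖x (l+1) - x l‖^2 + (τ : ℝ) * ε * L / 2 * ‖Δ‖^2 := by
    have step1 : L * ‖x k - xhat k‖ * ‖Δ‖ ≤ L * (∑ l ∈ S, ‖x (l+1) - x l‖) * ‖Δ‖ := by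
      apply mul_le_mul_of_nonneg_right _ (norm_nonneg _)
      exact mul_le_mul_of_nonneg_left hdnorm (le_of_lt hL)
    have step2 : L * (∑ l ∈ S, ‖x (l+1) - x l‖) * ‖Δ‖
        = ∑ l ∈ S, L * ‖x (l+1) - x l‖ * ‖Δ‖ := by
      rw [Finset.mul_sum, Finset.sum_mul]
    have step3 : ∑ l ∈ S, L * ‖x (l+1) - x l‖ * ‖Δ‖
        ≤ ∑ l ∈ S, (L / (2*ε) * ‖x (l+1) - x l‖^2 + ε * L / 2 * ‖Δ‖^2) := by
      apply Finset.sum_le_sum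
      intro l _
      have key : ‖x (l+1) - x l‖ * ‖Δ‖
          ≤ ‖x (l+1) - x l‖^2 / (2*ε) + ε / 2 * ‖Δ‖^2 := by
        have hεne : ε ≠ 0 := ne_of_gt hε
        have hid : ‖x (l+1) - x l‖^2 / (2*ε) + ε / 2 * ‖Δ‖^2 - ‖x (l+1) - x l‖ * ‖Δ‖
            = (‖x (l+1) - x l‖ - ε * ‖Δ‖)^2 / (2*ε) := by
          field_simp
          ring
        have hnn : 0 ≤ (‖x (l+1) - x l‖ - ε * ‖Δ‖)^2 / (2*ε) :=
          div_nonneg (sq_nonneg _) (by linarith)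
        linarith
      have := mul_le_mul_of_nonneg_left key (le_of_lt hL)
      calc L * ‖x (l+1) - x l‖ * ‖Δ‖
          = L * (‖x (l+1) - x l‖ * ‖Δ‖) := by ring
        _ ≤ L * (‖x (l+1) - x l‖^2 / (2*ε) + ε / 2 * ‖Δ‖^2) := this
        _ = L / (2*ε) * ‖x (l+1) - x l‖^2 + ε * L / 2 * ‖Δ‖^2 := by
            field_simp
    have step4 : ∑ l ∈ S, (L / (2*ε) * ‖x (l+1) - x l‖^2 + ε * L / 2 * ‖Δ‖^2)
        = (L / (2*ε)) * ∑ l ∈ S, ‖x (l+1) - x l‖^2 + (S.card : ℝ) * (ε * L / 2 * ‖Δ‖^2) := by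
      rw [Finset.sum_add_distrib, Finset.mul_sum, Finset.sum_const, nsmul_eq_mul]
    have hcard : (S.card : ℝ) ≤ (τ : ℝ) := by
      rw [hS, Nat.card_Ico]
      exact_mod_cast Nat.sub_le_iff_le_add.mpr (by omega)
    have step5 : (S.card : ℝ) * (ε * L / 2 * ‖Δ‖^2) ≤ (τ : ℝ) * ε * L / 2 * ‖Δ‖^2 := by
      have hnn : 0 ≤ ε * L / 2 * ‖Δ‖^2 := by positivity
      calc (S.card : ℝ) * (ε * L / 2 * ‖Δ‖^2) ≤ (τ : ℝ) * (ε * L / 2 * ‖Δ‖^2) :=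
            mul_le_mul_of_nonneg_right hcard hnn
        _ = (τ : ℝ) * ε * L / 2 * ‖Δ‖^2 := by ring
    calc L * ‖x k - xhat k‖ * ‖Δ‖ ≤ ∑ l ∈ S, L * ‖x (l+1) - x l‖ * ‖Δ‖ := by
          rw [← step2]; exact step1
      _ ≤ _ := step3
      _ = _ := step4
      _ ≤ _ := by linarith
  -- assemble
  have hΔsq : ‖Δ‖^2 = a^2 := by rw [hΔnorm, sq_abs]
  have hfinal : f (x (k+1)) - f (x k)
      ≤ -(L/γ) * a^2 + L * ‖x k - xhat k‖ * ‖Δ‖ + L/2 * ‖Δ‖^2 := by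
    have := hdesc
    rw [hsplit, hinner_g] at this
    linarith [hcross]
  rw [hΔsq] at hyoung
  have : ‖x (k+1) - x k‖ ^ 2 = a ^ 2 := by rw [← hΔ, hΔsq]
  rw [this]
  rw [hΔsq] at hfinal
  linarith
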